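/- Let d and m be positive integers, let P be the rational Dyck positroid induced by a d×m rational Dyck matrix D, and let (I_1,…,I_{d+m}) be the Grassmann necklace of P, with indices taken modulo d+m (so I_{d+m+1} = I_1). Then for every i ∈ {1,…,d+m}, one has i ∈ I_i and I_{i+1} = (I_i \ {i}) ∪ {j} for some j ≠ i; in particular, I_{i+1} ≠ I_i for every i, so the decorated permutation of P has no fixed points. -/

import Mathlib

/-- `D` is a `d × m` rational Dyck matrix: its zero entries (anchored in the
upper-right corner) are cut out by a (vertically reflected) rational Dyck path
of type `(m,d)`; `z j` is the number of north steps preceding the `(j+1)`-st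
east step. -/
def IsRDM (d m : ℕ) (D : Matrix (Fin d) (Fin m) ℝ) : Prop :=
  ∃ z : Fin m → ℕ, Monotone z ∧ (∀ j, z j ≤ d) ∧
    (∀ j : Fin m, m * z j ≤ d * (j : ℕ)) ∧
    (∀ i j, D i j = if (i : ℕ) + 1 ≤ z j then 0 else 1)

/-- The map `φ_{d,m}`: the first `d` columns form the identity matrix and the
entry in row `i`, column `d + j` is `(-1)^(d-i) * D (d+1-i) j` (1-indexed). -/
def phiMat {d m : ℕ} (D : Matrix (Fin d) (Fin m) ℝ) :
    Matrix (Fin d) (Fin (d + m)) ℝ := fun i c =>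
  if _ : (c : ℕ) < d then (if (c : ℕ) = (i : ℕ) then (1 : ℝ) else 0)
  else (-1 : ℝ) ^ (d - 1 - (i : ℕ)) *
    D ⟨d - 1 - (i : ℕ), by have := i.isLt; omega⟩
      ⟨(c : ℕ) - d, by have := c.isLt; omega⟩

/-- `B` is a basis of the matroid represented by the `d × n` matrix `A`. -/
def IsBasisOf {d n : ℕ} (A : Matrix (Fin d) (Fin n) ℝ) (B : Finset (Fin n)) : Prop :=
  B.card = d ∧ LinearIndependent ℝ (fun b : B => (A.transpose b.1))

open Classical in
/-- The weight `ω_A j`: the largest (1-indexed) row index with nonzero entry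
in column `j` (and `0` if the column is zero). -/
noncomputable def wt {d n : ℕ} (A : Matrix (Fin d) (Fin n) ℝ) (j : Fin n) : ℕ :=
  (Finset.univ.filter fun i : Fin d => A i j ≠ 0).sup fun i => (i : ℕ) + 1

/-- `c` is a principal index of `A`: (1-indexed) `d < c+1 ≤ d+m` and the
column `c` differs from the previous column. -/
def IsPrincipal {d m : ℕ} (A : Matrix (Fin d) (Fin (d + m)) ℝ) (c : Fin (d + m)) : Prop :=
  d ≤ (c : ℕ) ∧ ∃ i : Fin d, A i c ≠ A i ⟨(c : ℕ) - 1, by have := c.isLt; omega⟩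

/-- Position of `x` in the cyclically shifted order `≤_b`. -/
def shiftVal {n : ℕ} (b x : Fin n) : ℕ := ((x - b : Fin n) : ℕ)

/-- The list of positions (w.r.t. `≤_b`) of the elements of `B`, sorted increasingly. -/
def shiftedSorted {n : ℕ} (b : Fin n) (B : Finset (Fin n)) : List ℕ :=
  (B.val.map (shiftVal b)).sort (· ≤ ·)

/-- Lexicographic comparison of lists of naturals. -/
def lexLE (l₁ l₂ : List ℕ) : Prop := l₁ = l₂ ∨ List.Lex (· < ·) l₁ l₂

/-- `I` is the entry at base point `b` of the Grassmann necklace of the matroid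
represented by `A`: it is the lexicographically `≤_b`-minimal basis. -/
def IsGNEntry {d n : ℕ} (A : Matrix (Fin d) (Fin n) ℝ) (b : Fin n) (I : Finset (Fin n)) : Prop :=
  IsBasisOf A I ∧ ∀ B, IsBasisOf A B → lexLE (shiftedSorted b I) (shiftedSorted b B)

/-- Cyclic successor on `Fin n`. -/
def finSucc {n : ℕ} (b : Fin n) : Fin n :=
  ⟨((b : ℕ) + 1) % n, Nat.mod_lt _ (by have := b.isLt; omega)⟩

theorem my_lex_asymm : ∀ {l₁ l₂ : List ℕ}, List.Lex (· < ·) l₁ l₂ →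
    List.Lex (· < ·) l₂ l₁ → False := by
  intro l₁ l₂ h₁
  induction h₁ with
  | nil => intro h; cases h
  | @cons a t₁ t₂ h ih =>
      intro h2
      cases h2 with
      | cons h' => exact ih h'
      | rel h' => exact absurd h' (lt_irrefl _)
  | @rel a t₁ b t₂ h =>
      intro h2
      cases h2 with
      | cons h' => exact absurd h (lt_irrefl _)
      | rel h' => exact absurd (h.trans h') (lt_irrefl _)

theorem my_lex_of_le_of_lt : ∀ (i : ℕ) (l₁ l₂ : List ℕ),
    (∀ j (h₁ : j < l₁.length) (h₂ : j < l₂.length), j ≤ i → l₁[j] ≤ l₂[j]) →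
    ∀ (h₁ : i < l₁.length) (h₂ : i < l₂.length), l₁[i] < l₂[i] →
    List.Lex (· < ·) l₁ l₂ := by
  intro i
  induction i with
  | zero =>
      intro l₁ l₂ hle h₁ h₂ hlt
      match l₁, l₂ with
      | a :: t₁, b :: t₂ =>
          exact List.Lex.rel (by simpa using hlt)
  | succ i ih =>
      intro l₁ l₂ hle h₁ h₂ hlt
      match l₁, l₂ with
      | a :: t₁, b :: t₂ =>
          have hab : a ≤ b := by
            have := hle 0 (by simp) (by simp) (Nat.zero_le _)
            simpa using this
          rcases lt_or_eq_of_le hab with h | h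
          · exact List.Lex.rel h
          · subst h
            refine List.Lex.cons ?_
            refine ih t₁ t₂ ?_ (by simpa using h₁) (by simpa using h₂) (by simpa using hlt)
            intro j hj₁ hj₂ hji
            have := hle (j+1) (by simpa using Nat.succ_lt_succ hj₁)
              (by simpa using Nat.succ_lt_succ hj₂) (Nat.succ_le_succ hji)
            simpa using this

theorem sorted_getElem_le {L : List ℕ} (hs : List.Pairwise (· ≤ ·) L) {i c : ℕ}
    (hi : i < L.length) (hc : i < L.countP (fun x => decide (x ≤ c))) : L[i] ≤ c := by
  by_contra hlt
  push_neg at hlt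
  have hmono : ∀ j (hj : j < L.length), i ≤ j → c < L[j] := by
    intro j hj hij
    rcases eq_or_lt_of_le hij with rfl | h
    · exact hlt
    · exact lt_of_lt_of_le hlt ((List.pairwise_iff_getElem.mp hs) i j hi hj h)
  have hsplit : L.countP (fun x => decide (x ≤ c)) =
      (L.take i).countP (fun x => decide (x ≤ c)) + (L.drop i).countP (fun x => decide (x ≤ c)) := by
    conv_lhs => rw [← List.take_append_drop i L]
    exact List.countP_append
  have hdrop : (L.drop i).countP (fun x => decide (x ≤ c)) = 0 := by
    rw [List.countP_eq_zero]
    intro a ha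
    rcases List.mem_iff_getElem.mp ha with ⟨j, hj, rfl⟩
    have hj' : i + j < L.length := by
      have := hj; rw [List.length_drop] at this; omega
    rw [List.getElem_drop]
    simpa using Nat.not_le.mpr (hmono (i + j) hj' (Nat.le_add_right _ _))
  have htake : (L.take i).countP (fun x => decide (x ≤ c)) ≤ i := by
    calc (L.take i).countP (fun x => decide (x ≤ c)) ≤ (L.take i).length :=
          List.countP_le_length
      _ ≤ i := by rw [List.length_take]; omega
  omega

theorem sorted_countP_ge {L : List ℕ} (hs : List.Pairwise (· ≤ ·) L) {i : ℕ}
    (hi : i < L.length) : i + 1 ≤ L.countP (fun x => decide (x ≤ L[i])) := by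
  obtain ⟨c, hc⟩ : ∃ c, L[i] = c := ⟨_, rfl⟩
  rw [hc]
  have hsplit : L.countP (fun x => decide (x ≤ c)) =
      (L.take (i+1)).countP (fun x => decide (x ≤ c)) +
      (L.drop (i+1)).countP (fun x => decide (x ≤ c)) := by
    conv_lhs => rw [← List.take_append_drop (i+1) L]
    exact List.countP_append
  have htake : (L.take (i+1)).countP (fun x => decide (x ≤ c)) = (L.take (i+1)).length := by
    rw [List.countP_eq_length]
    intro a ha
    rcases List.mem_iff_getElem.mp ha with ⟨j, hj, rfl⟩
    have hj' : j < L.length := by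
      have := hj; rw [List.length_take] at this; omega
    have hji : j ≤ i := by
      have := hj; rw [List.length_take] at this; omega
    rw [List.getElem_take]
    simp only [decide_eq_true_eq]
    rcases eq_or_lt_of_le hji with rfl | h
    · exact le_of_eq hc
    · exact le_of_le_of_eq ((List.pairwise_iff_getElem.mp hs) j i hj' hi h) hc
  have hlen : (L.take (i+1)).length = i + 1 := by rw [List.length_take]; omega
  omega
section ShiftLemmas

variable {n : ℕ} [NeZero n]

theorem shiftVal_lt (b x : Fin n) : shiftVal b x < n := (x - b).isLt

theorem shiftVal_inj {b x y : Fin n} (h : shiftVal b x = shiftVal b y) : x = y := by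
  have : (x - b : Fin n) = (y - b : Fin n) := Fin.ext h
  exact sub_left_injective this

theorem shiftVal_eq (b x : Fin n) :
    shiftVal b x = if b.val ≤ x.val then x.val - b.val else n + x.val - b.val := by
  have hb := b.isLt
  have hx := x.isLt
  simp only [shiftVal, Fin.sub_def]
  split
  · next h =>
      have e : n - b.val + x.val = n + (x.val - b.val) := by omega
      rw [e, Nat.add_mod_left, Nat.mod_eq_of_lt (by omega)]
  · next h => rw [Nat.mod_eq_of_lt (by omega)]; omega

theorem shiftVal_self (b : Fin n) : shiftVal b b = 0 := by
  rw [shiftVal_eq]; simp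

theorem finSucc_val (b : Fin n) :
    (finSucc b).val = if b.val + 1 = n then 0 else b.val + 1 := by
  have hb := b.isLt
  simp only [finSucc]
  split
  · next h => rw [h, Nat.mod_self]
  · next h => exact Nat.mod_eq_of_lt (by omega)

theorem shiftVal_finSucc_self (b : Fin n) : shiftVal (finSucc b) b = n - 1 := by
  have hb := b.isLt
  rw [shiftVal_eq, finSucc_val]
  rcases eq_or_ne (b.val + 1) n with h | h
  · rw [if_pos h]; simp; omega
  · rw [if_neg h]
    have : ¬ (b.val + 1 ≤ b.val) := by omega
    rw [if_neg this]; omega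

theorem shiftVal_succ {b x : Fin n} (hx : x ≠ b) :
    shiftVal b x = shiftVal (finSucc b) x + 1 := by
  have hb := b.isLt
  have hxlt := x.isLt
  have hxb : x.val ≠ b.val := fun h => hx (Fin.ext h)
  rw [shiftVal_eq, shiftVal_eq, finSucc_val]
  rcases eq_or_ne (b.val + 1) n with h | h
  · rw [if_pos h, if_neg (show ¬ (b.val ≤ x.val) by omega)]
    simp only [Nat.zero_le, if_true, Nat.sub_zero]
    omega
  · rw [if_neg h]
    rcases Nat.lt_or_ge x.val (b.val + 1) with hc | hc
    · rw [if_neg (by omega), if_neg (by omega)]; omega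
    · rw [if_pos (by omega), if_pos (by omega)]; omega

theorem exists_shiftVal (b : Fin n) {k : ℕ} (hk : k < n) : ∃ x : Fin n, shiftVal b x = k := by
  refine ⟨b + ⟨k, hk⟩, ?_⟩
  show ((b + ⟨k, hk⟩ - b : Fin n) : ℕ) = k
  rw [add_sub_cancel_left]

end ShiftLemmas

section SortedLemmas

variable {n : ℕ} (b : Fin n) (B : Finset (Fin n))

theorem shiftedSorted_length : (shiftedSorted b B).length = B.card := by
  rw [shiftedSorted, Multiset.length_sort, Multiset.card_map]
  rfl

theorem shiftedSorted_sorted : List.Pairwise (· ≤ ·) (shiftedSorted b B) :=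
  Multiset.pairwise_sort ..

theorem shiftedSorted_countP (c : ℕ) :
    (shiftedSorted b B).countP (fun x => decide (x ≤ c)) =
      (B.filter (fun x => shiftVal b x ≤ c)).card := by
  rw [shiftedSorted, ← Multiset.coe_countP (fun x => x ≤ c), Multiset.sort_eq,
    Multiset.countP_map]
  rw [show (B.filter (fun x => shiftVal b x ≤ c)).card
      = Multiset.card (Multiset.filter (fun x => shiftVal b x ≤ c) B.val) from by
    rw [← Finset.filter_val]; rfl]

section LexCompare

variable {n : ℕ} [NeZero n]

theorem shiftedSorted_getElem_le {b : Fin n} {B : Finset (Fin n)} {i c : ℕ}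
    (hi : i < (shiftedSorted b B).length)
    (h : i < (B.filter (fun x => shiftVal b x ≤ c)).card) :
    (shiftedSorted b B)[i] ≤ c := by
  refine sorted_getElem_le (shiftedSorted_sorted b B) hi ?_
  rw [shiftedSorted_countP]
  exact h

theorem shiftedSorted_filter_ge {b : Fin n} {B : Finset (Fin n)} {i : ℕ}
    (hi : i < (shiftedSorted b B).length) :
    i + 1 ≤ (B.filter (fun x => shiftVal b x ≤ (shiftedSorted b B)[i])).card := by
  rw [← shiftedSorted_countP]
  exact sorted_countP_ge (shiftedSorted_sorted b B) hi

theorem shiftedSorted_lex (b : Fin n) (J K : Finset (Fin n))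
    (hcard : K.card = J.card) (y : Fin n) (hyK : y ∈ K) (hyJ : y ∉ J)
    (hsub : ∀ x ∈ J, shiftVal b x < shiftVal b y → x ∈ K) :
    List.Lex (· < ·) (shiftedSorted b K) (shiftedSorted b J) := by
  classical
  set t := (J.filter (fun x => shiftVal b x < shiftVal b y)).card with ht
  have hlenJ : (shiftedSorted b J).length = J.card := shiftedSorted_length b J
  have hlenK : (shiftedSorted b K).length = K.card := shiftedSorted_length b K
  -- t < J.card
  have htlt : t < J.card := by
    rcases lt_or_eq_of_le (Finset.card_le_card (Finset.filter_subset
      (fun x => shiftVal b x < shiftVal b y) J)) with h | h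
    · exact h
    · exfalso
      have hfull : J.filter (fun x => shiftVal b x < shiftVal b y) = J :=
        Finset.eq_of_subset_of_card_le (Finset.filter_subset _ _) (le_of_eq h.symm)
      have hJK : J ⊆ K := by
        intro x hx
        have : x ∈ J.filter (fun x => shiftVal b x < shiftVal b y) := by
          rw [hfull]; exact hx
        rcases Finset.mem_filter.mp this with ⟨hx', hlt⟩
        exact hsub x hx' hlt
      have : J ⊂ K := ⟨hJK, fun h' => hyJ (h' hyK)⟩
      exact absurd hcard (ne_of_gt (Finset.card_lt_card this))
  have htltK : t < (shiftedSorted b K).length := by rw [hlenK, hcard]; exact htlt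
  have htltJ : t < (shiftedSorted b J).length := by rw [hlenJ]; exact htlt
  -- Step A : i < t → (shiftedSorted b J)[i] < shiftVal b y
  have stepA : ∀ i (h : i < t) (hh : i < (shiftedSorted b J).length), (shiftedSorted b J)[i] < shiftVal b y := by
    intro i h hh
    rcases Nat.eq_zero_or_pos (shiftVal b y) with h0 | h0
    · exfalso
      have : J.filter (fun x => shiftVal b x < shiftVal b y) = ∅ := by
        rw [Finset.filter_eq_empty_iff]; intro x _; omega
      have h0' : t = 0 := by rw [ht, this, Finset.card_empty]
      omega
    · have hfe : J.filter (fun x => shiftVal b x < shiftVal b y)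
          = J.filter (fun x => shiftVal b x ≤ shiftVal b y - 1) := by
        apply Finset.filter_congr
        intro x _
        omega
      have := shiftedSorted_getElem_le (b := b) (B := J) hh (c := shiftVal b y - 1)
        (by rw [← hfe, ← ht]; exact h)
      omega
  -- Step B1 : i < t → (shiftedSorted b K)[i] ≤ (shiftedSorted b J)[i]
  have stepB1 : ∀ i (h : i < t) (hK : i < (shiftedSorted b K).length) (hJ : i < (shiftedSorted b J).length),
      (shiftedSorted b K)[i] ≤ (shiftedSorted b J)[i] := by
    intro i h hK hJ
    refine shiftedSorted_getElem_le hK ?_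
    have hsubf : J.filter (fun x => shiftVal b x ≤ (shiftedSorted b J)[i])
        ⊆ K.filter (fun x => shiftVal b x ≤ (shiftedSorted b J)[i]) := by
      intro x hx
      rcases Finset.mem_filter.mp hx with ⟨hxJ, hxle⟩
      exact Finset.mem_filter.mpr ⟨hsub x hxJ (lt_of_le_of_lt hxle (stepA i h hJ)), hxle⟩
    calc i < i + 1 := Nat.lt_succ_self _
      _ ≤ (J.filter (fun x => shiftVal b x ≤ (shiftedSorted b J)[i])).card := shiftedSorted_filter_ge hJ
      _ ≤ _ := Finset.card_le_card hsubf
  -- Step B2 : (shiftedSorted b K)[t] ≤ shiftVal b y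
  have stepB2 : (shiftedSorted b K)[t]'htltK ≤ shiftVal b y := by
    refine shiftedSorted_getElem_le htltK ?_
    have hins : insert y (J.filter (fun x => shiftVal b x < shiftVal b y))
        ⊆ K.filter (fun x => shiftVal b x ≤ shiftVal b y) := by
      intro x hx
      rcases Finset.mem_insert.mp hx with rfl | hx
      · exact Finset.mem_filter.mpr ⟨hyK, le_refl _⟩
      · rcases Finset.mem_filter.mp hx with ⟨hxJ, hlt⟩
        exact Finset.mem_filter.mpr ⟨hsub x hxJ hlt, le_of_lt hlt⟩
    have hyni : y ∉ J.filter (fun x => shiftVal b x < shiftVal b y) := by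
      intro h; exact hyJ (Finset.mem_filter.mp h).1
    calc t < t + 1 := Nat.lt_succ_self _
      _ = (insert y (J.filter (fun x => shiftVal b x < shiftVal b y))).card := by
          rw [Finset.card_insert_of_notMem hyni, ht]
      _ ≤ _ := Finset.card_le_card hins
  -- Step B3 : shiftVal b y < (shiftedSorted b J)[t]
  have stepB3 : shiftVal b y < (shiftedSorted b J)[t]'htltJ := by
    by_contra hcon
    push_neg at hcon
    have hge := shiftedSorted_filter_ge htltJ
    have hsubf : J.filter (fun x => shiftVal b x ≤ (shiftedSorted b J)[t]'htltJ)
        ⊆ J.filter (fun x => shiftVal b x < shiftVal b y) := by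
      intro x hx
      rcases Finset.mem_filter.mp hx with ⟨hxJ, hxle⟩
      refine Finset.mem_filter.mpr ⟨hxJ, ?_⟩
      rcases lt_or_eq_of_le (le_trans hxle hcon) with h | h
      · exact h
      · exact absurd (shiftVal_inj h) (fun he => hyJ (he ▸ hxJ))
    have := Finset.card_le_card hsubf
    omega
  refine my_lex_of_le_of_lt t (shiftedSorted b K) (shiftedSorted b J) ?_ htltK htltJ (lt_of_le_of_lt stepB2 stepB3)
  intro j hj₁ hj₂ hjt
  rcases lt_or_eq_of_le hjt with h | h
  · exact stepB1 j h hj₁ hj₂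
  · subst h
    exact le_of_lt (lt_of_le_of_lt stepB2 stepB3)

end LexCompare
section LinAlg
open Submodule

variable {d n : ℕ}

theorem li_insert (v : Fin n → (Fin d → ℝ)) {S : Finset (Fin n)}
    (hS : LinearIndependent ℝ (fun s : S => v s.1)) {c : Fin n}
    (hc : v c ∉ span ℝ (v '' ↑S)) :
    LinearIndependent ℝ (fun s : (insert c S : Finset (Fin n)) => v s.1) := by
  classical
  have hinj : Set.InjOn v ↑S := by
    intro x hx y hy hxy
    have := hS.injective (a₁ := ⟨x, Finset.mem_coe.mp hx⟩) (a₂ := ⟨y, Finset.mem_coe.mp hy⟩)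
      (by simpa using hxy)
    exact congrArg Subtype.val this
  have hset : LinearIndependent ℝ (fun x : ↥(v '' ↑S) => (x : Fin d → ℝ)) :=
    (linearIndepOn_iff_image hinj).mp hS
  have hins : LinearIndependent ℝ
      (fun x : ↥(insert (v c) (v '' ↑S)) => (x : Fin d → ℝ)) := LinearIndepOn.id_insert hset hc
  have heq : insert (v c) (v '' (↑S : Set (Fin n))) = v '' ↑(insert c S) := by
    rw [Finset.coe_insert, Set.image_insert_eq]
  have hinj' : Set.InjOn v ↑(insert c S) := by
    intro x hx y hy hxy
    rw [Finset.coe_insert, Set.mem_insert_iff] at hx hy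
    rcases hx with rfl | hx
    · rcases hy with rfl | hy
      · rfl
      · exact absurd (hxy ▸ Set.mem_image_of_mem v hy) (fun h => hc (subset_span h))
    · rcases hy with rfl | hy
      · exact absurd (hxy ▸ Set.mem_image_of_mem v hx) (fun h => hc (subset_span h))
      · exact hinj hx hy hxy
  exact (linearIndepOn_iff_image hinj').mpr (heq ▸ hins)

theorem exists_basis_ext (v : Fin n → (Fin d → ℝ))
    (hspan : ⊤ ≤ span ℝ (Set.range v)) :
    ∀ (k : ℕ) (S : Finset (Fin n)), d - S.card ≤ k →
      LinearIndependent ℝ (fun s : S => v s.1) →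
      ∃ B : Finset (Fin n), S ⊆ B ∧ B.card = d ∧
        LinearIndependent ℝ (fun s : B => v s.1) := by
  classical
  intro k
  induction k with
  | zero =>
      intro S hk hS
      have hle : S.card ≤ d := by
        have := hS.fintype_card_le_finrank
        rwa [Fintype.card_coe, Module.finrank_pi, Fintype.card_fin] at this
      exact ⟨S, Finset.Subset.refl S, by omega, hS⟩
  | succ k ih =>
      intro S hk hS
      have hle : S.card ≤ d := by
        have := hS.fintype_card_le_finrank
        rwa [Fintype.card_coe, Module.finrank_pi, Fintype.card_fin] at this
      rcases eq_or_lt_of_le hle with h | h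
      · exact ⟨S, Finset.Subset.refl S, h, hS⟩
      · have hrange : Set.range (fun s : S => v s.1) = v '' ↑S := by
          rw [Set.image_eq_range]
          rfl
        have hrk : Module.finrank ℝ (span ℝ (v '' ↑S)) = S.card := by
          have := finrank_span_eq_card hS
          rwa [Fintype.card_coe, hrange] at this
        have hne : ¬ (⊤ ≤ span ℝ (v '' (↑S : Set (Fin n)))) := by
          intro htop
          have : span ℝ (v '' (↑S : Set (Fin n))) = ⊤ := eq_top_iff.mpr htop
          rw [this, finrank_top, Module.finrank_pi, Fintype.card_fin] at hrk
          omega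
        have hex : ∃ c, v c ∉ span ℝ (v '' (↑S : Set (Fin n))) := by
          by_contra hcon
          push_neg at hcon
          refine hne (le_trans hspan (span_le.mpr ?_))
          rintro _ ⟨c, rfl⟩
          exact hcon c
        rcases hex with ⟨c, hc⟩
        have hcS : c ∉ S := fun hmem =>
          hc (subset_span (Set.mem_image_of_mem v (Finset.mem_coe.mpr hmem)))
        have hS' := li_insert v hS hc
        have hcard' : (insert c S).card = S.card + 1 := Finset.card_insert_of_notMem hcS
        rcases ih (insert c S) (by omega) hS' with ⟨B, hsub, hBcard, hBLI⟩
        exact ⟨B, le_trans (Finset.subset_insert c S) hsub, hBcard, hBLI⟩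

end LinAlg

section Greedy
open Submodule

variable {d n : ℕ} [NeZero n]

/-- The set of elements of `J` strictly `≤_b`-below `y`. -/
def lowSet (b : Fin n) (J : Finset (Fin n)) (y : Fin n) : Set (Fin n) :=
  {x | x ∈ J ∧ shiftVal b x < shiftVal b y}

theorem greedy_mem (A : Matrix (Fin d) (Fin n) ℝ) (b : Fin n) {J : Finset (Fin n)}
    (hJLI : LinearIndependent ℝ (fun s : J => A.transpose s.1)) {y : Fin n} (hy : y ∈ J) :
    A.transpose y ∉ span ℝ (A.transpose '' lowSet b J y) := by
  have himg : (fun s : J => A.transpose s.1) ''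
      {x : ↥J | shiftVal b x.1 < shiftVal b y} = A.transpose '' lowSet b J y := by
    ext w
    constructor
    · rintro ⟨⟨x, hxJ⟩, hlt, rfl⟩
      exact ⟨x, ⟨hxJ, hlt⟩, rfl⟩
    · rintro ⟨x, ⟨hxJ, hlt⟩, rfl⟩
      exact ⟨⟨x, hxJ⟩, hlt, rfl⟩
  have := hJLI.notMem_span_image (s := {x : ↥J | shiftVal b x.1 < shiftVal b y})
    (x := ⟨y, hy⟩) (show ¬ (shiftVal b y < shiftVal b y) from lt_irrefl _)
  rwa [himg] at this

theorem greedy_not_mem (A : Matrix (Fin d) (Fin n) ℝ) (b : Fin n)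
    (hspan : ⊤ ≤ span ℝ (Set.range fun c => A.transpose c)) {J : Finset (Fin n)}
    (hJ : IsGNEntry A b J) {y : Fin n} (hy : y ∉ J) :
    A.transpose y ∈ span ℝ (A.transpose '' lowSet b J y) := by
  classical
  by_contra h
  set S : Finset (Fin n) := J.filter (fun x => shiftVal b x < shiftVal b y) with hSdef
  have himg : A.transpose '' lowSet b J y = A.transpose '' ↑S := by
    congr 1
    ext x
    simp [lowSet, hSdef]
  have hSLI : LinearIndependent ℝ (fun s : S => A.transpose s.1) := by
    have hf : Function.Injective
        (fun x : ↥S => (⟨x.1, (Finset.mem_filter.mp x.2).1⟩ : ↥J)) := by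
      intro a b hab
      exact Subtype.ext (congrArg (fun z : ↥J => z.1) hab)
    exact (hJ.1.2).comp (fun x : ↥S => (⟨x.1, (Finset.mem_filter.mp x.2).1⟩ : ↥J)) hf
  rw [himg] at h
  have hyS : y ∉ S := fun hmem => hy (Finset.mem_filter.mp hmem).1
  have hS' := li_insert (fun c => A.transpose c) hSLI h
  rcases exists_basis_ext (fun c => A.transpose c) hspan d (insert y S)
    (by omega) hS' with ⟨K, hsub, hKcard, hKLI⟩
  have hKb : IsBasisOf A K := ⟨hKcard, hKLI⟩
  have hlex : List.Lex (· < ·) (shiftedSorted b K) (shiftedSorted b J) := by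
    refine shiftedSorted_lex b J K (by rw [hKcard, hJ.1.1]) y
      (hsub (Finset.mem_insert_self y S)) hy ?_
    intro x hxJ hlt
    exact hsub (Finset.mem_insert_of_mem (Finset.mem_filter.mpr ⟨hxJ, hlt⟩))
  rcases hJ.2 K hKb with heq | hlt
  · rw [heq] at hlex
    exact my_lex_asymm hlex hlex
  · exact my_lex_asymm hlex hlt

end Greedy
section MatrixFacts
open Submodule

variable {d m : ℕ}

theorem phi_col_id (D : Matrix (Fin d) (Fin m) ℝ) (c : Fin (d + m)) (hc : (c : ℕ) < d) :
    (phiMat D).transpose c = fun i : Fin d => if (c : ℕ) = (i : ℕ) then (1 : ℝ) else 0 := by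
  funext i
  simp only [Matrix.transpose_apply, phiMat, dif_pos hc]

theorem id_comb (D : Matrix (Fin d) (Fin m) ℝ) (y : Fin d → ℝ) (r : Fin d) :
    (∑ i : Fin d, y i • (phiMat D).transpose ⟨(i : ℕ), by omega⟩) r = y r := by
  rw [Finset.sum_apply]
  have hterm : ∀ i ∈ Finset.univ,
      (y i • (phiMat D).transpose (⟨(i : ℕ), by omega⟩ : Fin (d + m))) r
        = if i = r then y i else 0 := by
    intro i _
    have hc : ((⟨(i : ℕ), by omega⟩ : Fin (d + m)) : ℕ) < d := by simpa using i.isLt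
    simp only [Pi.smul_apply, phi_col_id D _ hc, smul_eq_mul]
    by_cases h : (i : ℕ) = (r : ℕ)
    · rw [if_pos h, if_pos (Fin.ext h), mul_one]
    · rw [if_neg h, if_neg (fun hh => h (congrArg Fin.val hh)), mul_zero]
  rw [Finset.sum_congr rfl hterm, Finset.sum_ite_eq' Finset.univ r y]
  simp

theorem phi_spanTop (D : Matrix (Fin d) (Fin m) ℝ) :
    ⊤ ≤ span ℝ (Set.range fun c => (phiMat D).transpose c) := by
  intro x _
  have hx : x = ∑ i : Fin d, x i • (phiMat D).transpose ⟨(i : ℕ), by omega⟩ := by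
    funext r
    rw [id_comb]
  rw [hx]
  exact Submodule.sum_mem _ (fun i _ =>
    Submodule.smul_mem _ _ (subset_span (Set.mem_range_self _)))

theorem phi_z_lt (hd : 0 < d) (hm : 0 < m) {z : Fin m → ℕ}
    (hineq : ∀ j : Fin m, m * z j ≤ d * (j : ℕ)) (j : Fin m) :
    z j < d := by
  by_contra hge
  push_neg at hge
  have h1 : m * d ≤ m * z j := Nat.mul_le_mul_left m hge
  have h2 : d * (j : ℕ) ≤ d * (m - 1) := Nat.mul_le_mul_left d (by omega)
  have h3 : m * d ≤ d * (m - 1) := le_trans (le_trans h1 (hineq j)) h2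
  have h4 : d * m ≤ d * (m - 1) := by rw [Nat.mul_comm] at h3; exact h3
  have := Nat.le_of_mul_le_mul_left h4 hd
  omega

theorem phi_col_dyck {D : Matrix (Fin d) (Fin m) ℝ} {z : Fin m → ℕ}
    (hDeq : ∀ i j, D i j = if (i : ℕ) + 1 ≤ z j then 0 else 1)
    (c : Fin (d + m)) (hc : d ≤ (c : ℕ)) (i : Fin d) (jv : Fin m)
    (hjv : (jv : ℕ) = (c : ℕ) - d) :
    (phiMat D).transpose c i =
      if d - 1 - (i : ℕ) + 1 ≤ z jv then 0 else (-1 : ℝ) ^ (d - 1 - (i : ℕ)) := by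
  simp only [Matrix.transpose_apply, phiMat, dif_neg (by omega : ¬ (c : ℕ) < d)]
  rw [hDeq]
  have hjeq : (⟨(c : ℕ) - d, by have := c.isLt; omega⟩ : Fin m) = jv :=
    Fin.ext (by simp [hjv])
  rw [hjeq]
  simp only [Fin.mk.injEq]
  split
  · next h => exact mul_zero _
  · next h => exact mul_one _

theorem phi_col_ne_zero (hd : 0 < d) (hm : 0 < m) {D : Matrix (Fin d) (Fin m) ℝ}
    (hD : IsRDM d m D) (c : Fin (d + m)) : (phiMat D).transpose c ≠ 0 := by
  obtain ⟨z, _, _, hineq, hDeq⟩ := hD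
  rcases Nat.lt_or_ge (c : ℕ) d with hc | hc
  · intro h0
    have := congrFun h0 ⟨(c : ℕ), hc⟩
    rw [phi_col_id D c hc] at this
    simp at this
  · intro h0
    have h1 := congrFun h0 ⟨0, hd⟩
    rw [phi_col_dyck hDeq c hc ⟨0, hd⟩ ⟨(c : ℕ) - d, by have := c.isLt; omega⟩ rfl] at h1
    have hzlt : z ⟨(c : ℕ) - d, by have := c.isLt; omega⟩ < d :=
      phi_z_lt hd hm hineq _
    rw [if_neg (by simp; omega)] at h1
    exact absurd h1 (by positivity)

theorem phi_span_compl (hd : 0 < d) (hm : 0 < m) {D : Matrix (Fin d) (Fin m) ℝ}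
    (hD : IsRDM d m D) (b : Fin (d + m)) :
    ⊤ ≤ span ℝ ((fun c => (phiMat D).transpose c) '' {x | x ≠ b}) := by
  obtain ⟨z, _, _, hineq, hDeq⟩ := hD
  rcases Nat.lt_or_ge (b : ℕ) d with hb | hb
  case _ =>
    -- identity columns except b, plus the first Dyck column
    have hcdlt : d < d + m := by omega
    have hcdb : (⟨d, hcdlt⟩ : Fin (d + m)) ≠ b := by
      intro h
      rw [Fin.ext_iff] at h
      simp at h
      omega
    set w : Fin d → ℝ := (phiMat D).transpose ⟨d, hcdlt⟩ with hw
    have hz0 : z ⟨0, hm⟩ = 0 := by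
      have := hineq ⟨0, hm⟩
      simp at this
      omega
    have hwval : ∀ i : Fin d, w i = (-1 : ℝ) ^ (d - 1 - (i : ℕ)) := by
      intro i
      rw [hw, phi_col_dyck hDeq _ (by simp) i ⟨0, hm⟩ (by simp)]
      rw [if_neg (by rw [hz0]; omega)]
    set bd : Fin d := ⟨(b : ℕ), hb⟩ with hbd
    have hwb : w bd ≠ 0 := by rw [hwval]; positivity
    intro x _
    set cc : ℝ := x bd / w bd with hcc
    have hx : x = cc • w + ∑ i ∈ Finset.univ.erase bd,
        (x i - cc * w i) • (phiMat D).transpose ⟨(i : ℕ), by omega⟩ := by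
      have hsum : ∀ r : Fin d, (∑ i ∈ Finset.univ.erase bd,
          (x i - cc * w i) • (phiMat D).transpose ⟨(i : ℕ), by omega⟩) r
            = if r ∈ Finset.univ.erase bd then x r - cc * w r else 0 := by
        intro r
        have hfull := id_comb D (fun i => if i ∈ Finset.univ.erase bd then x i - cc * w i else 0) r
        rw [Finset.sum_apply] at hfull ⊢
        rw [← hfull, ← Finset.sum_subset (Finset.subset_univ (Finset.univ.erase bd))]
        · exact Finset.sum_congr rfl (fun i hi => by rw [if_pos hi])
        · intro i _ hni
          rw [if_neg hni, zero_smul, Pi.zero_apply]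
      funext r
      rw [Pi.add_apply, hsum r]
      by_cases hr : r = bd
      · subst hr
        rw [if_neg (by simp)]
        simp only [Pi.smul_apply, smul_eq_mul, add_zero, hcc]
        field_simp
      · rw [if_pos (Finset.mem_erase.mpr ⟨hr, Finset.mem_univ r⟩)]
        simp only [Pi.smul_apply, smul_eq_mul]
        ring
    rw [hx]
    refine Submodule.add_mem _ ?_ ?_
    · exact Submodule.smul_mem _ _ (subset_span ⟨⟨d, hcdlt⟩, hcdb, rfl⟩)
    · refine Submodule.sum_mem _ (fun i hi => Submodule.smul_mem _ _ (subset_span ?_))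
      refine ⟨⟨(i : ℕ), by omega⟩, ?_, rfl⟩
      intro h
      rw [Fin.ext_iff] at h
      simp at h
      exact (Finset.mem_erase.mp hi).1 (Fin.ext (by rw [hbd]; simpa using h))
  case _ =>
    intro x _
    have hx : x = ∑ i : Fin d, x i • (phiMat D).transpose ⟨(i : ℕ), by omega⟩ := by
      funext r
      rw [id_comb]
    rw [hx]
    refine Submodule.sum_mem _ (fun i _ => Submodule.smul_mem _ _ (subset_span ?_))
    refine ⟨⟨(i : ℕ), by omega⟩, ?_, rfl⟩
    intro h
    rw [Fin.ext_iff] at h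
    simp at h
    omega

end MatrixFacts

section MainProof
open Submodule

/-- For the Grassmann necklace `(I_1, …, I_{d+m})` of a rational Dyck positroid
(here `I b` is the `≤_b`-lexicographically minimal basis, 0-indexed), every
entry contains its base point, consecutive entries satisfy
`I_{i+1} = (I_i \ {i}) ∪ {j}` for some `j ≠ i`, and in particular consecutive
entries are distinct (so the decorated permutation has no fixed points). -/
theorem grassmannNecklace_of_RDP_no_fixed_points (d m : ℕ) (hd : 0 < d) (hm : 0 < m)
    (D : Matrix (Fin d) (Fin m) ℝ) (hD : IsRDM d m D)
    (I : Fin (d + m) → Finset (Fin (d + m)))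
    (hI : ∀ b, IsGNEntry (phiMat D) b (I b)) :
    ∀ b : Fin (d + m), b ∈ I b ∧
      (∃ j : Fin (d + m), j ≠ b ∧ I (finSucc b) = insert j ((I b).erase b)) ∧
      I (finSucc b) ≠ I b := by
  classical
  haveI : NeZero (d + m) := ⟨by omega⟩
  intro b
  obtain hIb := hI b
  obtain hJ := hI (finSucc b)
  have hspan := phi_spanTop D
  -- the base point belongs to its own necklace entry
  have hbI : b ∈ I b := by
    by_contra hb
    have hmem := greedy_not_mem (phiMat D) b hspan hIb hb
    have hempty : lowSet b (I b) b = ∅ := by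
      ext x
      simp [lowSet, shiftVal_self]
    have e : (phiMat D).transpose '' (∅ : Set (Fin (d + m))) = ∅ := Set.image_empty _
    rw [hempty, e, span_empty, Submodule.mem_bot] at hmem
    exact phi_col_ne_zero hd hm hD b hmem
  -- the base point does not belong to the next necklace entry
  have hbJ : b ∉ I (finSucc b) := by
    by_contra hbJ
    have hWle : span ℝ ((fun c => (phiMat D).transpose c) '' {x | x ≠ b})
        ≤ span ℝ ((fun c => (phiMat D).transpose c) '' ↑((I (finSucc b)).erase b)) := by
      rw [span_le]
      rintro _ ⟨x, hxne, rfl⟩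
      by_cases hxJ : x ∈ I (finSucc b)
      · exact subset_span ⟨x, Finset.mem_coe.mpr (Finset.mem_erase.mpr ⟨hxne, hxJ⟩), rfl⟩
      · have hmem := greedy_not_mem (phiMat D) (finSucc b) hspan hJ hxJ
        refine span_mono (Set.image_mono ?_) hmem
        rintro t ⟨htJ, htlt⟩
        refine Finset.mem_coe.mpr (Finset.mem_erase.mpr ⟨?_, htJ⟩)
        intro htb
        rw [htb, shiftVal_finSucc_self] at htlt
        have := shiftVal_lt (finSucc b) x
        omega
    have htop : span ℝ ((fun c => (phiMat D).transpose c) '' ↑((I (finSucc b)).erase b)) = ⊤ :=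
      eq_top_iff.mpr (le_trans (phi_span_compl hd hm hD b) hWle)
    have h1 : Module.finrank ℝ (span ℝ ((fun c => (phiMat D).transpose c)
        '' ↑((I (finSucc b)).erase b))) ≤ ((I (finSucc b)).erase b).card := by
      rw [show ((fun c => (phiMat D).transpose c) '' ↑((I (finSucc b)).erase b))
          = ↑(((I (finSucc b)).erase b).image (fun c => (phiMat D).transpose c)) from
        (Finset.coe_image).symm]
      exact le_trans (finrank_span_finset_le_card _) Finset.card_image_le
    rw [htop, finrank_top, Module.finrank_pi, Fintype.card_fin] at h1
    have h2 : ((I (finSucc b)).erase b).card = d - 1 := by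
      rw [Finset.card_erase_of_mem hbJ, hJ.1.1]
    omega
  -- the key induction : (I b).erase b ⊆ I (finSucc b)
  have key : ∀ k : ℕ,
      (∀ x ∈ (I b).erase b, shiftVal (finSucc b) x < k → x ∈ I (finSucc b)) ∧
      span ℝ ((fun c => (phiMat D).transpose c) ''
          {t | t ∈ I (finSucc b) ∧ shiftVal (finSucc b) t < k})
        ≤ span ℝ ((fun c => (phiMat D).transpose c) ''
          insert b {t | t ∈ (I b).erase b ∧ shiftVal (finSucc b) t < k}) := by
    intro k
    induction k with
    | zero =>
        constructor
        · intro x _ hx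
          exact absurd hx (by omega)
        · rw [span_le]
          rintro _ ⟨t, ⟨_, htlt⟩, rfl⟩
          exact absurd htlt (by omega)
    | succ k ih =>
        have hsubW :
            insert b {t | t ∈ (I b).erase b ∧ shiftVal (finSucc b) t < k}
              ⊆ insert b {t | t ∈ (I b).erase b ∧ shiftVal (finSucc b) t < k + 1} := by
          intro t ht
          rcases Set.mem_insert_iff.mp ht with rfl | ⟨h1, h2⟩
          · exact Set.mem_insert _ _
          · exact Set.mem_insert_of_mem _ ⟨h1, by omega⟩
        constructor
        · intro x hxA hxlt
          rcases Nat.lt_or_ge (shiftVal (finSucc b) x) k with h | h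
          · exact ih.1 x hxA h
          · have hxk : shiftVal (finSucc b) x = k := by omega
            by_contra hxJ
            have hmem := greedy_not_mem (phiMat D) (finSucc b) hspan hJ hxJ
            have hxb : x ≠ b := (Finset.mem_erase.mp hxA).1
            have hxI : x ∈ I b := (Finset.mem_erase.mp hxA).2
            have hlow : lowSet (finSucc b) (I (finSucc b)) x
                = {t | t ∈ I (finSucc b) ∧ shiftVal (finSucc b) t < k} := by
              ext t
              simp [lowSet, hxk]
            rw [hlow] at hmem
            have hmem2 := ih.2 hmem
            have hnot := greedy_mem (phiMat D) b hIb.1.2 hxI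
            apply hnot
            refine span_mono (Set.image_mono ?_) hmem2
            intro t ht
            rcases Set.mem_insert_iff.mp ht with htb | ⟨h1, h2⟩
            · rw [htb]
              refine ⟨hbI, ?_⟩
              rw [shiftVal_self]
              have hne : shiftVal b x ≠ 0 :=
                fun h0 => hxb (shiftVal_inj (h0.trans (shiftVal_self b).symm))
              omega
            · have htb : t ≠ b := (Finset.mem_erase.mp h1).1
              refine ⟨(Finset.mem_erase.mp h1).2, ?_⟩
              have h3 := shiftVal_succ (b := b) htb
              have h4 := shiftVal_succ (b := b) hxb
              omega
        · rw [span_le]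
          rintro _ ⟨t, ⟨htJ, htlt⟩, rfl⟩
          rcases Nat.lt_or_ge (shiftVal (finSucc b) t) k with h | h
          · exact span_mono (Set.image_mono hsubW)
              (ih.2 (subset_span ⟨t, ⟨htJ, h⟩, rfl⟩))
          · have htk : shiftVal (finSucc b) t = k := by omega
            have htb : t ≠ b := fun h' => hbJ (h' ▸ htJ)
            by_cases htA : t ∈ (I b).erase b
            · exact subset_span ⟨t, Set.mem_insert_of_mem _ ⟨htA, by omega⟩, rfl⟩
            · have htI : t ∉ I b := fun hmem => htA (Finset.mem_erase.mpr ⟨htb, hmem⟩)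
              have hmem := greedy_not_mem (phiMat D) b hspan hIb htI
              refine span_mono (Set.image_mono ?_) hmem
              rintro s ⟨hsI, hslt⟩
              by_cases hsb : s = b
              · rw [hsb]
                exact Set.mem_insert _ _
              · refine Set.mem_insert_of_mem _ ⟨Finset.mem_erase.mpr ⟨hsb, hsI⟩, ?_⟩
                have h3 := shiftVal_succ (b := b) hsb
                have h4 := shiftVal_succ (b := b) htb
                omega
  have hsubJ : (I b).erase b ⊆ I (finSucc b) := fun x hx =>
    (key (d + m)).1 x hx (shiftVal_lt (finSucc b) x)
  have hA'card : ((I b).erase b).card = d - 1 := by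
    rw [Finset.card_erase_of_mem hbI, hIb.1.1]
  have hsd : ((I (finSucc b)) \ (I b).erase b).card = 1 := by
    rw [Finset.card_sdiff_of_subset hsubJ, hJ.1.1, hA'card]
    omega
  obtain ⟨j, hj⟩ := Finset.card_eq_one.mp hsd
  have hjJ : j ∈ I (finSucc b) := by
    have hj' : j ∈ (I (finSucc b)) \ (I b).erase b := by
      rw [hj]
      exact Finset.mem_singleton_self j
    exact (Finset.mem_sdiff.mp hj').1
  have hjb : j ≠ b := fun h => hbJ (h ▸ hjJ)
  have hJeq : I (finSucc b) = insert j ((I b).erase b) := by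
    have hu := Finset.union_sdiff_of_subset hsubJ
    rw [hj] at hu
    rw [← hu, Finset.insert_eq, Finset.union_comm]
  exact ⟨hbI, ⟨j, hjb, hJeq⟩, fun h => hbJ (by rw [h]; exact hbI)⟩

end MainProof
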